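/- arXiv:1708.05395 — 2 statements merged into one kernel-verified Lean document; each statement's English description precedes it below -/
import Mathlib

section
/- Suppose additionally that y >= sqrt(1 - (x - 1/2)^2) + 3*sqrt(3)/2 (region R4_4). Then the optimal radius for packings of 4 equal circles satisfies r_4(x,y) = 1/2. -/
noncomputable section

set_option maxHeartbeats 2000000

/-- The point `(a, b)` in the Euclidean plane. -/
def pt (a b : ℝ) : EuclideanSpace ℝ (Fin 2) :=
  (WithLp.equiv 2 (Fin 2 → ℝ)).symm ![a, b]

/-- The lattice generated by `v1 = (1,0)` and `v2 = (x,y)`. -/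
def TLat (x y : ℝ) : Set (EuclideanSpace ℝ (Fin 2)) :=
  {v | ∃ m n : ℤ, v = (m : ℝ) • pt 1 0 + (n : ℝ) • pt x y}

/-- `p` is a packing of `k` equal circles of radius `r` on the flat torus `ℝ²/Λ(x,y)`. -/
def IsPacking (x y : ℝ) {k : ℕ} (r : ℝ) (p : Fin k → EuclideanSpace ℝ (Fin 2)) : Prop :=
  ∀ i j : Fin k, ∀ l ∈ TLat x y, (i ≠ j ∨ l ≠ 0) → 2 * r ≤ ‖p i - p j + l‖

/-- The optimal (supremal) radius for packings of `k` equal circles on the torus `ℝ²/Λ(x,y)`. -/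
def optRadius (x y : ℝ) (k : ℕ) : ℝ :=
  sSup {r : ℝ | 0 ≤ r ∧ ∃ p : Fin k → EuclideanSpace ℝ (Fin 2), IsPacking x y r p}

lemma pt_combo (a b c d x y : ℝ) (m n : ℤ) :
    pt a b - pt c d + ((m:ℝ) • pt 1 0 + (n:ℝ) • pt x y)
      = pt (a - c + ((m:ℝ) + (n:ℝ)*x)) (b - d + (n:ℝ)*y) := by
  ext i; fin_cases i <;> simp [pt] <;> ring

lemma lat_pt (x y : ℝ) (m n : ℤ) :
    (m:ℝ) • pt 1 0 + (n:ℝ) • pt x y = pt ((m:ℝ) + (n:ℝ)*x) ((n:ℝ)*y) := by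
  ext i; fin_cases i <;> simp [pt]

lemma norm_pt (a b : ℝ) : ‖pt a b‖ = Real.sqrt (a^2 + b^2) := by
  rw [EuclideanSpace.norm_eq]
  congr 1
  simp [Fin.sum_univ_two, pt, sq_abs]

lemma one_le_norm_pt {a b : ℝ} (h : 1 ≤ a^2 + b^2) : 1 ≤ ‖pt a b‖ := by
  rw [norm_pt]
  have := Real.sqrt_le_sqrt h
  simpa using this

lemma pt_one_zero_ne : pt 1 0 ≠ 0 := by
  intro h
  have := congrArg (fun v => v 0) h
  simp [pt] at this

lemma Bdom (A B c : ℝ) (hc : 1 ≤ c) (hB : B ≤ -c ∨ c ≤ B) : 1 ≤ A^2 + B^2 := by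
  have h1 : c^2 ≤ B^2 := by rcases hB with h|h <;> nlinarith
  nlinarith [sq_nonneg A]

lemma Adom (A B c : ℝ) (hc : 1 ≤ c) (hA : A ≤ -c ∨ c ≤ A) : 1 ≤ A^2 + B^2 := by
  have h1 : c^2 ≤ A^2 := by rcases hA with h|h <;> nlinarith
  nlinarith [sq_nonneg B]

lemma qq (A B c : ℝ) (hc2 : 3/4 ≤ c^2) (hc0 : 0 ≤ c)
    (hA : A ≤ -(1/2) ∨ 1/2 ≤ A) (hB : B ≤ -c ∨ c ≤ B) : 1 ≤ A^2 + B^2 := by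
  have h1 : 1/4 ≤ A^2 := by rcases hA with h|h <;> nlinarith
  have h2 : c^2 ≤ B^2 := by rcases hB with h|h <;> nlinarith
  linarith

lemma crit (A B w : ℝ) (hw0 : 0 ≤ w) (hw2 : 1 ≤ A^2 + w^2) (hB : B ≤ -w ∨ w ≤ B) :
    1 ≤ A^2 + B^2 := by
  have : w^2 ≤ B^2 := by rcases hB with h|h <;> nlinarith
  linarith

lemma master (x y : ℝ) (hy : 0 < y) (hx0 : 0 ≤ x) (hx1 : x ≤ 1 / 2)
    (hreg : Real.sqrt (1 - (x - 1 / 2) ^ 2) + 3 * Real.sqrt 3 / 2 ≤ y)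
    (σ : ℝ) (d m n : ℤ)
    (hσd : (d = 0 ∧ σ = 0) ∨ (d = 1 ∧ (σ = 1/2 ∨ σ = -1/2))
      ∨ (d = -1 ∧ (σ = 1/2 ∨ σ = -1/2)) ∨ (d = 2 ∧ σ = 0) ∨ (d = -2 ∧ σ = 0)
      ∨ (d = 3 ∧ σ = 1/2) ∨ (d = -3 ∧ σ = -1/2))
    (hne : d ≠ 0 ∨ m ≠ 0 ∨ n ≠ 0) :
    1 ≤ (σ + (m:ℝ) + (n:ℝ)*x)^2 + ((d:ℝ)*(Real.sqrt 3/2) + (n:ℝ)*y)^2 := by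
  set s := Real.sqrt 3 with hs_def
  have hs2 : s^2 = 3 := Real.sq_sqrt (by norm_num)
  have hs0 : 0 < s := Real.sqrt_pos.mpr (by norm_num)
  have hs1 : 1 ≤ s := by nlinarith
  set w := Real.sqrt (1 - (x - 1/2)^2) with hw_def
  have hxx : (x - 1/2)^2 ≤ 1/4 := by nlinarith
  have hw2 : w^2 = 1 - (x - 1/2)^2 := Real.sq_sqrt (by nlinarith)
  have hw0 : 0 ≤ w := Real.sqrt_nonneg _
  have hws : s/2 ≤ w := by nlinarith
  have hy2 : 2*s ≤ y := by nlinarith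
  have hc34 : 3/4 ≤ (s/2)^2 := by nlinarith
  have hcw : 3/4 ≤ w^2 := by nlinarith
  have hD : -3 ≤ (d:ℝ) ∧ (d:ℝ) ≤ 3 := by
    rcases hσd with ⟨h,_⟩|⟨h,_⟩|⟨h,_⟩|⟨h,_⟩|⟨h,_⟩|⟨h,_⟩|⟨h,_⟩ <;> subst h <;> norm_num
  obtain hn | hn | hn | hn | hn : n ≤ -2 ∨ n = -1 ∨ n = 0 ∨ n = 1 ∨ 2 ≤ n := by omega
  · -- n ≤ -2
    have hN : (n:ℝ) ≤ -2 := by exact_mod_cast hn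
    have h1 : (d:ℝ)*(s/2) ≤ 3*s/2 := by
      nlinarith [mul_nonneg (by linarith [hD.2] : (0:ℝ) ≤ 3 - d) hs0.le]
    have h2 : (n:ℝ)*y ≤ -2*y := by
      nlinarith [mul_nonneg (by linarith : (0:ℝ) ≤ -(n:ℝ) - 2) hy.le]
    exact Bdom _ _ (5*s/2) (by linarith) (Or.inl (by linarith))
  · -- n = -1
    subst hn
    rcases hσd with ⟨hd,hσ⟩|⟨hd,hσ⟩|⟨hd,hσ⟩|⟨hd,hσ⟩|⟨hd,hσ⟩|⟨hd,hσ⟩|⟨hd,hσ⟩ <;> subst hd <;> push_cast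
    · exact Bdom _ _ s hs1 (Or.inl (by linarith))
    · exact Bdom _ _ s hs1 (Or.inl (by linarith))
    · exact Bdom _ _ s hs1 (Or.inl (by linarith))
    · exact Bdom _ _ s hs1 (Or.inl (by linarith))
    · exact Bdom _ _ s hs1 (Or.inl (by linarith))
    · -- d = 3, σ = 1/2 : critical
      subst hσ
      have hB : 3*(s/2) + (-1)*y ≤ -w := by linarith
      obtain hm | hm | hm : m = 0 ∨ 1 ≤ m ∨ m ≤ -1 := by omega
      · subst hm; push_cast
        exact crit _ _ w hw0 (by nlinarith) (Or.inl hB)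
      · have hM : (1:ℝ) ≤ m := by exact_mod_cast hm
        exact qq _ _ w hcw hw0 (Or.inr (by linarith)) (Or.inl hB)
      · have hM : (m:ℝ) ≤ -1 := by exact_mod_cast hm
        exact qq _ _ w hcw hw0 (Or.inl (by linarith)) (Or.inl hB)
    · exact Bdom _ _ s hs1 (Or.inl (by linarith))
  · -- n = 0
    subst hn
    rcases hσd with ⟨hd,hσ⟩|⟨hd,hσ⟩|⟨hd,hσ⟩|⟨hd,hσ⟩|⟨hd,hσ⟩|⟨hd,hσ⟩|⟨hd,hσ⟩ <;> subst hd <;> push_cast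
    · -- d = 0 : m ≠ 0
      subst hσ
      have hm : m ≤ -1 ∨ 1 ≤ m := by
        rcases hne with h|h|h
        · exact absurd rfl h
        · omega
        · exact absurd rfl h
      refine Adom _ _ 1 le_rfl ?_
      rcases hm with h|h
      · exact Or.inl (by have : (m:ℝ) ≤ -1 := (by exact_mod_cast h); linarith)
      · exact Or.inr (by have : (1:ℝ) ≤ m := (by exact_mod_cast h); linarith)
    · -- d = 1
      refine qq _ _ (s/2) hc34 (by linarith) ?_ (Or.inr (by linarith))
      rcases hσ with rfl|rfl
      · rcases (by omega : m ≤ -1 ∨ 0 ≤ m) with h|h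
        · exact Or.inl (by have : (m:ℝ) ≤ -1 := (by exact_mod_cast h); linarith)
        · exact Or.inr (by have : (0:ℝ) ≤ m := (by exact_mod_cast h); linarith)
      · rcases (by omega : m ≤ 0 ∨ 1 ≤ m) with h|h
        · exact Or.inl (by have : (m:ℝ) ≤ 0 := (by exact_mod_cast h); linarith)
        · exact Or.inr (by have : (1:ℝ) ≤ m := (by exact_mod_cast h); linarith)
    · -- d = -1
      refine qq _ _ (s/2) hc34 (by linarith) ?_ (Or.inl (by linarith))
      rcases hσ with rfl|rfl
      · rcases (by omega : m ≤ -1 ∨ 0 ≤ m) with h|h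
        · exact Or.inl (by have : (m:ℝ) ≤ -1 := (by exact_mod_cast h); linarith)
        · exact Or.inr (by have : (0:ℝ) ≤ m := (by exact_mod_cast h); linarith)
      · rcases (by omega : m ≤ 0 ∨ 1 ≤ m) with h|h
        · exact Or.inl (by have : (m:ℝ) ≤ 0 := (by exact_mod_cast h); linarith)
        · exact Or.inr (by have : (1:ℝ) ≤ m := (by exact_mod_cast h); linarith)
    · exact Bdom _ _ s hs1 (Or.inr (by linarith))
    · exact Bdom _ _ s hs1 (Or.inl (by linarith))
    · exact Bdom _ _ s hs1 (Or.inr (by linarith))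
    · exact Bdom _ _ s hs1 (Or.inl (by linarith))
  · -- n = 1
    subst hn
    rcases hσd with ⟨hd,hσ⟩|⟨hd,hσ⟩|⟨hd,hσ⟩|⟨hd,hσ⟩|⟨hd,hσ⟩|⟨hd,hσ⟩|⟨hd,hσ⟩ <;> subst hd <;> push_cast
    · exact Bdom _ _ s hs1 (Or.inr (by linarith))
    · exact Bdom _ _ s hs1 (Or.inr (by linarith))
    · exact Bdom _ _ s hs1 (Or.inr (by linarith))
    · exact Bdom _ _ s hs1 (Or.inr (by linarith))
    · exact Bdom _ _ s hs1 (Or.inr (by linarith))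
    · exact Bdom _ _ s hs1 (Or.inr (by linarith))
    · -- d = -3, σ = -1/2 : critical
      subst hσ
      have hB : w ≤ (-3)*(s/2) + 1*y := by linarith
      obtain hm | hm | hm : m = 0 ∨ 1 ≤ m ∨ m ≤ -1 := by omega
      · subst hm; push_cast
        exact crit _ _ w hw0 (by nlinarith) (Or.inr hB)
      · have hM : (1:ℝ) ≤ m := by exact_mod_cast hm
        exact qq _ _ w hcw hw0 (Or.inr (by linarith)) (Or.inr hB)
      · have hM : (m:ℝ) ≤ -1 := by exact_mod_cast hm
        exact qq _ _ w hcw hw0 (Or.inl (by linarith)) (Or.inr hB)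
  · -- 2 ≤ n
    have hN : (2:ℝ) ≤ (n:ℝ) := by exact_mod_cast hn
    have h1 : -(3*s/2) ≤ (d:ℝ)*(s/2) := by
      nlinarith [mul_nonneg (by linarith [hD.1] : (0:ℝ) ≤ (d:ℝ) + 3) hs0.le]
    have h2 : 2*y ≤ (n:ℝ)*y := by
      nlinarith [mul_nonneg (by linarith : (0:ℝ) ≤ (n:ℝ) - 2) hy.le]
    exact Bdom _ _ (5*s/2) (by linarith) (Or.inr (by linarith))

theorem four_circles_region_R4 (x y : ℝ) (hxy : 1 ≤ x ^ 2 + y ^ 2) (hy : 0 < y) (hx0 : 0 ≤ x) (hx1 : x ≤ 1 / 2)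
    (hreg : Real.sqrt (1 - (x - 1 / 2) ^ 2) + 3 * Real.sqrt 3 / 2 ≤ y)
    : optRadius x y 4 = 1 / 2 := by
  have hub : ∀ r ∈ {r : ℝ | 0 ≤ r ∧ ∃ p : Fin 4 → EuclideanSpace ℝ (Fin 2), IsPacking x y r p},
      r ≤ 1/2 := by
    rintro r ⟨hr0, p, hp⟩
    have hmem : pt 1 0 ∈ TLat x y := ⟨1, 0, by push_cast; rw [one_smul, zero_smul, add_zero]⟩
    have h := hp 0 0 (pt 1 0) hmem (Or.inr pt_one_zero_ne)
    rw [sub_self, zero_add, norm_pt] at h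
    have : Real.sqrt ((1:ℝ)^2 + 0^2) = 1 := by norm_num
    rw [this] at h
    linarith
  have hpack : IsPacking x y (1/2)
      ![pt 0 0, pt (1/2) (Real.sqrt 3/2), pt 0 (Real.sqrt 3), pt (1/2) (3*Real.sqrt 3/2)] := by
    intro i j l hl hcond
    obtain ⟨m, n, rfl⟩ := hl
    rw [show (2:ℝ) * (1/2) = 1 by norm_num]
    rcases eq_or_ne i j with rfl | hij
    · have hl0 := hcond.resolve_left (by simp)
      have hmn : m ≠ 0 ∨ n ≠ 0 := by
        by_contra h
        push_neg at h
        obtain ⟨rfl, rfl⟩ := h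
        exact hl0 (by push_cast; simp)
      rw [sub_self, zero_add, lat_pt]
      exact one_le_norm_pt (le_trans
        (master x y hy hx0 hx1 hreg 0 0 m n (Or.inl ⟨rfl, rfl⟩) (Or.inr hmn))
        (le_of_eq (by push_cast; ring)))
    · fin_cases i <;> fin_cases j <;>
        first
        | exact absurd rfl hij
        | (show 1 ≤ ‖pt _ _ - pt _ _ + _‖
           rw [pt_combo]
           refine one_le_norm_pt ?_)
      · exact le_trans (master x y hy hx0 hx1 hreg (-1/2) (-1) m n (by norm_num)
          (Or.inl (by norm_num))) (le_of_eq (by push_cast; ring))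
      · exact le_trans (master x y hy hx0 hx1 hreg 0 (-2) m n (by norm_num)
          (Or.inl (by norm_num))) (le_of_eq (by push_cast; ring))
      · exact le_trans (master x y hy hx0 hx1 hreg (-1/2) (-3) m n (by norm_num)
          (Or.inl (by norm_num))) (le_of_eq (by push_cast; ring))
      · exact le_trans (master x y hy hx0 hx1 hreg (1/2) 1 m n (by norm_num)
          (Or.inl (by norm_num))) (le_of_eq (by push_cast; ring))
      · exact le_trans (master x y hy hx0 hx1 hreg (1/2) (-1) m n (by norm_num)
          (Or.inl (by norm_num))) (le_of_eq (by push_cast; ring))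
      · exact le_trans (master x y hy hx0 hx1 hreg 0 (-2) m n (by norm_num)
          (Or.inl (by norm_num))) (le_of_eq (by push_cast; ring))
      · exact le_trans (master x y hy hx0 hx1 hreg 0 2 m n (by norm_num)
          (Or.inl (by norm_num))) (le_of_eq (by push_cast; ring))
      · exact le_trans (master x y hy hx0 hx1 hreg (-1/2) 1 m n (by norm_num)
          (Or.inl (by norm_num))) (le_of_eq (by push_cast; ring))
      · exact le_trans (master x y hy hx0 hx1 hreg (-1/2) (-1) m n (by norm_num)
          (Or.inl (by norm_num))) (le_of_eq (by push_cast; ring))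
      · exact le_trans (master x y hy hx0 hx1 hreg (1/2) 3 m n (by norm_num)
          (Or.inl (by norm_num))) (le_of_eq (by push_cast; ring))
      · exact le_trans (master x y hy hx0 hx1 hreg 0 2 m n (by norm_num)
          (Or.inl (by norm_num))) (le_of_eq (by push_cast; ring))
      · exact le_trans (master x y hy hx0 hx1 hreg (1/2) 1 m n (by norm_num)
          (Or.inl (by norm_num))) (le_of_eq (by push_cast; ring))
  have hmem12 : (1/2 : ℝ) ∈ {r : ℝ | 0 ≤ r ∧ ∃ p : Fin 4 → EuclideanSpace ℝ (Fin 2),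
      IsPacking x y r p} := ⟨by norm_num, _, hpack⟩
  apply le_antisymm
  · exact csSup_le ⟨1/2, hmem12⟩ hub
  · exact le_csSup ⟨1/2, hub⟩ hmem12
end
end

section
/- Suppose additionally that y < sqrt(1 - (x - 1/2)^2) + sqrt(3)/2 (region R1_2). Let r = sqrt(x^2 + y^2) * sqrt((x-1)^2 + y^2) / (4y) and R = sqrt(16*r^2 - 1). Then the configuration p : Fin 2 -> R^2 given by p 0 = (0,0) and p 1 = (1/2, R/2) is a packing of 2 equal circles of radius r on the flat torus R^2/Lambda; that is, ||p i - p j + lambda|| >= 2r for all i, j in Fin 2 and all lambda in Lambda with (i ≠ j or lambda ≠ 0). -/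
noncomputable section

lemma pt_add (a b c d : ℝ) : pt a b + pt c d = pt (a+c) (b+d) := by
  ext i; fin_cases i <;> simp [pt]

lemma pt_sub (a b c d : ℝ) : pt a b - pt c d = pt (a-c) (b-d) := by
  ext i; fin_cases i <;> simp [pt]

lemma pt_smul (t a b : ℝ) : t • pt a b = pt (t*a) (t*b) := by
  ext i; fin_cases i <;> simp [pt]

lemma pt_zero : pt 0 0 = 0 := by
  ext i; fin_cases i <;> simp [pt]

lemma pt_congr {a b c d : ℝ} (h1 : a = c) (h2 : b = d) : pt a b = pt c d := by rw [h1, h2]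

lemma key_main (x y R : ℝ) (hxy : 1 ≤ x ^ 2 + y ^ 2) (hy : 0 < y) (hx0 : 0 ≤ x)
    (hx1 : x ≤ 1 / 2) (hRy : R * y = x ^ 2 + y ^ 2 - x) (hR0 : 0 ≤ R) (m n : ℤ) :
    1 + R ^ 2 ≤ 4 * (((m : ℝ) + n * x - 1/2) ^ 2 + ((n : ℝ) * y - R/2) ^ 2) := by
  have hy2 : (3:ℝ)/4 ≤ y ^ 2 := by nlinarith
  have hR2y : R ≤ 2 * y := by nlinarith
  rcases lt_trichotomy n 0 with hn | rfl | hn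
  · have hn' : (n : ℝ) ≤ -1 := by exact_mod_cast (by omega : n ≤ -1)
    have h1 : (0:ℝ) ≤ (-(n:ℝ)) * y * R := by
      apply mul_nonneg (mul_nonneg (by linarith) hy.le) hR0
    nlinarith [sq_nonneg ((m : ℝ) + n * x - 1/2), sq_nonneg ((n:ℝ) + 1),
      mul_nonneg (mul_nonneg (sub_nonneg.mpr (by nlinarith : (1:ℝ) ≤ (n:ℝ)^2)) hy.le) hy.le]
  · rcases le_or_gt m 0 with hm | hm
    · have hm' : (m : ℝ) ≤ 0 := by exact_mod_cast hm
      nlinarith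
    · have hm' : (1:ℝ) ≤ (m : ℝ) := by exact_mod_cast hm
      nlinarith
  · rcases lt_or_ge n 2 with hn2 | hn2
    · have hn1 : n = 1 := by omega
      subst hn1
      have key : 1 + R ^ 2 = 4 * ((x - 1/2)^2 + (y - R/2)^2) := by nlinarith [hRy]
      rcases lt_trichotomy m 0 with hm | rfl | hm
      · have hm' : (m : ℝ) ≤ -1 := by exact_mod_cast (by omega : m ≤ -1)
        push_cast
        nlinarith
      · push_cast; nlinarith
      · have hm' : (1:ℝ) ≤ (m : ℝ) := by exact_mod_cast hm
        push_cast
        nlinarith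
    · have hn' : (2:ℝ) ≤ (n : ℝ) := by exact_mod_cast hn2
      have h1 : (0:ℝ) ≤ (n:ℝ) * y - R := by nlinarith
      nlinarith [sq_nonneg ((m : ℝ) + n * x - 1/2), mul_nonneg (mul_nonneg (by linarith : (0:ℝ) ≤ (n:ℝ)) hy.le) h1,
        mul_nonneg (sub_nonneg.mpr hn') (mul_nonneg hy.le h1)]

lemma key_lat (x y : ℝ) (hxy : 1 ≤ x ^ 2 + y ^ 2) (hy : 0 < y) (hx0 : 0 ≤ x)
    (hx1 : x ≤ 1 / 2) (m n : ℤ) (hmn : ¬(m = 0 ∧ n = 0)) :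
    1 ≤ ((m : ℝ) + n * x) ^ 2 + ((n : ℝ) * y) ^ 2 := by
  have hy2 : (3:ℝ)/4 ≤ y ^ 2 := by nlinarith
  rcases lt_trichotomy n 0 with hn | rfl | hn
  · rcases lt_or_ge n (-1) with hn2 | hn2
    · have hn' : (n : ℝ) ≤ -2 := by exact_mod_cast (by omega : n ≤ -2)
      nlinarith [sq_nonneg ((m:ℝ) + n * x), sq_nonneg ((n:ℝ) + 2)]
    · have hn1 : n = -1 := by omega
      subst hn1
      push_cast
      rcases le_or_gt m 0 with hm | hm
      · have hm' : (m : ℝ) ≤ 0 := by exact_mod_cast hm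
        nlinarith
      · have hm' : (1:ℝ) ≤ (m : ℝ) := by exact_mod_cast hm
        nlinarith
  · have hm : m ≠ 0 := by tauto
    push_cast
    rcases lt_or_ge m 0 with h | h
    · have hm' : (m : ℝ) ≤ -1 := by exact_mod_cast (by omega : m ≤ -1)
      nlinarith
    · have hm' : (1:ℝ) ≤ (m : ℝ) := by exact_mod_cast (by omega : 1 ≤ m)
      nlinarith
  · rcases lt_or_ge n 2 with hn2 | hn2
    · have hn1 : n = 1 := by omega
      subst hn1
      push_cast
      rcases le_or_gt m (-1) with hm | hm
      · have hm' : (m : ℝ) ≤ -1 := by exact_mod_cast hm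
        nlinarith
      · have hm' : (0:ℝ) ≤ (m : ℝ) := by exact_mod_cast (by omega : 0 ≤ m)
        nlinarith
    · have hn' : (2:ℝ) ≤ (n : ℝ) := by exact_mod_cast hn2
      nlinarith [sq_nonneg ((m:ℝ) + n * x), sq_nonneg ((n:ℝ) - 2)]

lemma sqle (r R a b : ℝ) (h2r : 0 ≤ 2*r) (h16 : 16 * r ^ 2 = 1 + R ^ 2)
    (h : 1 + R ^ 2 ≤ 4 * (a ^ 2 + b ^ 2)) : 2 * r ≤ ‖pt a b‖ := by
  rw [norm_pt]
  have h2 : (2*r) ^ 2 ≤ a ^ 2 + b ^ 2 := by nlinarith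
  calc 2 * r = Real.sqrt ((2*r) ^ 2) := (Real.sqrt_sq h2r).symm
    _ ≤ Real.sqrt (a ^ 2 + b ^ 2) := Real.sqrt_le_sqrt h2

set_option maxHeartbeats 400000 in
theorem two_circles_packing_R1 (x y : ℝ) (hxy : 1 ≤ x ^ 2 + y ^ 2) (hy : 0 < y) (hx0 : 0 ≤ x) (hx1 : x ≤ 1 / 2)
    (hreg : y < Real.sqrt (1 - (x - 1 / 2) ^ 2) + Real.sqrt 3 / 2)
    (r R : ℝ) (hr : r = Real.sqrt (x ^ 2 + y ^ 2) * Real.sqrt ((x - 1) ^ 2 + y ^ 2) / (4 * y))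
    (hR : R = Real.sqrt (16 * r ^ 2 - 1))
    : IsPacking x y r ![pt 0 0, pt (1 / 2) (R / 2)] := by
  have hy2 : (3:ℝ)/4 ≤ y ^ 2 := by nlinarith
  have hA : (0:ℝ) ≤ x ^ 2 + y ^ 2 := by positivity
  have hB : (0:ℝ) ≤ (x - 1) ^ 2 + y ^ 2 := by positivity
  have hr0 : 0 ≤ r := by rw [hr]; positivity
  have h16 : 16 * r ^ 2 - 1 = ((x ^ 2 + y ^ 2 - x) / y) ^ 2 := by
    rw [hr, div_pow, mul_pow, Real.sq_sqrt hA, Real.sq_sqrt hB]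
    field_simp
    ring
  have hsx : (0:ℝ) ≤ (x ^ 2 + y ^ 2 - x) / y := by
    apply div_nonneg (by nlinarith) hy.le
  have hRval : R = (x ^ 2 + y ^ 2 - x) / y := by
    rw [hR, h16, Real.sqrt_sq hsx]
  have hRy : R * y = x ^ 2 + y ^ 2 - x := by
    rw [hRval]; field_simp
  have hR0 : 0 ≤ R := hRval ▸ hsx
  have h16' : 16 * r ^ 2 = 1 + R ^ 2 := by
    have : R ^ 2 = 16 * r ^ 2 - 1 := by
      rw [hR, Real.sq_sqrt (by rw [h16]; positivity)]
    linarith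
  -- R^2 ≤ 3 from the region condition
  have h3 : Real.sqrt 3 ^ 2 = 3 := Real.sq_sqrt (by norm_num)
  have h30 : (0:ℝ) ≤ Real.sqrt 3 := Real.sqrt_nonneg 3
  have hkey : x ^ 2 + y ^ 2 - x ≤ Real.sqrt 3 * y := by
    rcases le_or_gt y (Real.sqrt 3 / 2) with h | h
    · nlinarith
    · have h2 : y - Real.sqrt 3 / 2 < Real.sqrt (1 - (x - 1/2) ^ 2) := by linarith
      have h4 : (y - Real.sqrt 3 / 2) ^ 2 < 1 - (x - 1/2) ^ 2 :=
        (Real.lt_sqrt (by linarith)).mp h2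
      nlinarith
  have hR3 : R ^ 2 ≤ 3 := by
    have hRs : R ≤ Real.sqrt 3 := by
      rw [hRval, div_le_iff₀ hy]; linarith
    nlinarith
  -- the packing
  intro i j l hl hne
  obtain ⟨m, n, rfl⟩ := hl
  have hlpt : (m : ℝ) • pt 1 0 + (n : ℝ) • pt x y = pt ((m : ℝ) + n * x) ((n : ℝ) * y) := by
    rw [pt_smul, pt_smul, pt_add]; exact pt_congr (by ring) (by ring)
  have h2r : (0:ℝ) ≤ 2 * r := by linarith
  have hdiag : ∀ v : EuclideanSpace ℝ (Fin 2),
      ¬(m = 0 ∧ n = 0) → 2 * r ≤ ‖v - v + ((m : ℝ) • pt 1 0 + (n : ℝ) • pt x y)‖ := by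
    intro v hmn
    rw [sub_self, zero_add, hlpt]
    apply sqle r R _ _ h2r h16'
    have h5 := key_lat x y hxy hy hx0 hx1 m n hmn
    linarith [h5, hR3]
  have hmn0 : (m : ℝ) • pt 1 0 + (n : ℝ) • pt x y ≠ 0 → ¬(m = 0 ∧ n = 0) := by
    rintro h ⟨rfl, rfl⟩
    apply h
    rw [hlpt]; push_cast; simpa using pt_zero
  have hoff1 : 2 * r ≤ ‖pt 0 0 - pt (1/2) (R/2) + ((m : ℝ) • pt 1 0 + (n : ℝ) • pt x y)‖ := by
    have he : pt 0 0 - pt (1/2) (R/2) + ((m : ℝ) • pt 1 0 + (n : ℝ) • pt x y)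
        = pt ((m : ℝ) + n * x - 1/2) ((n : ℝ) * y - R/2) := by
      rw [hlpt, pt_sub, pt_add]; exact pt_congr (by ring) (by ring)
    rw [he]
    exact sqle r R _ _ h2r h16' (key_main x y R hxy hy hx0 hx1 hRy hR0 m n)
  have hoff2 : 2 * r ≤ ‖pt (1/2) (R/2) - pt 0 0 + ((m : ℝ) • pt 1 0 + (n : ℝ) • pt x y)‖ := by
    have hk := key_main x y R hxy hy hx0 hx1 hRy hR0 (-m) (-n)
    push_cast at hk
    have he : pt (1/2) (R/2) - pt 0 0 + ((m : ℝ) • pt 1 0 + (n : ℝ) • pt x y)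
        = pt (-((-(m:ℝ)) + (-(n:ℝ)) * x - 1/2)) (-((-(n:ℝ)) * y - R/2)) := by
      rw [hlpt, pt_sub, pt_add]; exact pt_congr (by ring) (by ring)
    rw [he]
    apply sqle r R _ _ h2r h16'
    have h1 : (-((-(m:ℝ)) + (-(n:ℝ)) * x - 1/2)) ^ 2 = ((-(m:ℝ)) + (-(n:ℝ)) * x - 1/2) ^ 2 := by ring
    have h2 : (-((-(n:ℝ)) * y - R/2)) ^ 2 = ((-(n:ℝ)) * y - R/2) ^ 2 := by ring
    rw [h1, h2]
    exact hk
  have hcase : ∀ i : Fin 2, i = 0 ∨ i = 1 := by decide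
  have hz : (![pt 0 0, pt (1/2) (R/2)] : Fin 2 → EuclideanSpace ℝ (Fin 2)) 0 = pt 0 0 := rfl
  have ho : (![pt 0 0, pt (1/2) (R/2)] : Fin 2 → EuclideanSpace ℝ (Fin 2)) 1 = pt (1/2) (R/2) := rfl
  rcases hcase i with rfl | rfl <;> rcases hcase j with rfl | rfl
  · rw [hz]
    exact hdiag _ (hmn0 (hne.resolve_left (by simp)))
  · rw [hz, ho]; exact hoff1
  · rw [hz, ho]; exact hoff2
  · rw [ho]
    exact hdiag _ (hmn0 (hne.resolve_left (by simp)))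
end
end
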